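/- Let T be a finite plane tree with maximal arity m, and let v' be the parent of a non-root node u, with v' at depth ℓ (i.e., distance ℓ from the root). With x_u defined via x_u = d(u) + Σ_{i=1}^{d(u)} c(u_i)(m+2)^{-i}, one has 1 < x_u - x_{v'} < 1 + (m+2)^{-ℓ+1}. -/

import Mathlib

inductive PlaneTree where
  | node : List PlaneTree → PlaneTree

namespace PlaneTree

def childrenOf : PlaneTree → List PlaneTree
  | .node cs => cs

def numNodes : PlaneTree → ℕ
  | .node cs => 1 + (cs.attach.map (fun c => numNodes c.1)).sum
decreasing_by have := List.sizeOf_lt_of_mem c.2; simp only [PlaneTree.node.sizeOf_spec]; omega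

/-- maximal number of children of a node of the tree -/
def maxArity : PlaneTree → ℕ
  | .node cs => max cs.length ((cs.attach.map (fun c => maxArity c.1)).foldr max 0)
decreasing_by have := List.sizeOf_lt_of_mem c.2; simp only [PlaneTree.node.sizeOf_spec]; omega

/-- the subtree rooted at the node reached by following the path `p` of
(0-based, left-to-right) child indices from the root, if it exists. -/
def subtreeAt : PlaneTree → List ℕ → Option PlaneTree
  | t, [] => some t
  | t, i :: p =>
    match (childrenOf t)[i]? with
    | some c => subtreeAt c p
    | none => none

/-- `p` is a valid path to a node of `t` (the root is `[]`); the depth of the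
corresponding node is `p.length`. -/
def IsNode (t : PlaneTree) (p : List ℕ) : Prop := (t.subtreeAt p).isSome

/-- number of children of the node at path `p` (0 if the path is invalid). -/
def arityAt (t : PlaneTree) (p : List ℕ) : ℕ :=
  ((t.subtreeAt p).map (fun s => s.childrenOf.length)).getD 0

/-- `c(u_{i+1})`: the sibling index, counted from right to left starting at 1,
of the node at depth `i+1` on the path `p`. -/
def cAt (t : PlaneTree) (p : List ℕ) (i : ℕ) : ℕ :=
  arityAt t (p.take i) - p.getD i 0

/-- `x_u = d(u) + Σ_{i=1}^{d(u)} c(u_i) (m+2)^{-i}` for the node `u` at path `p`,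
where `m` is the maximal arity of `t`. -/
noncomputable def xVal (t : PlaneTree) (p : List ℕ) : ℝ :=
  (p.length : ℝ) + ∑ i ∈ Finset.range p.length,
    (cAt t p i : ℝ) * ((maxArity t : ℝ) + 2) ^ (-(i + 1 : ℤ))

end PlaneTree

open PlaneTree

private lemma le_foldr_max {a : ℕ} {l : List ℕ} (h : a ∈ l) : a ≤ l.foldr max 0 := by
  induction l with
  | nil => simp at h
  | cons b l ih =>
    rcases List.mem_cons.1 h with rfl | h
    · simp
    · exact le_trans (ih h) (le_max_right _ _)

private lemma maxArity_child_le {c : PlaneTree} {cs : List PlaneTree} (h : c ∈ cs) :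
    maxArity c ≤ maxArity (.node cs) := by
  rw [maxArity]
  refine le_trans ?_ (le_max_right _ _)
  exact le_foldr_max (List.mem_map.2 ⟨⟨c, h⟩, List.mem_attach _ _, rfl⟩)

private lemma childrenOf_length_le (t : PlaneTree) : t.childrenOf.length ≤ maxArity t := by
  cases t with
  | node cs => rw [maxArity, childrenOf]; exact le_max_left _ _

private lemma maxArity_subtreeAt {t s : PlaneTree} {q : List ℕ}
    (h : t.subtreeAt q = some s) : maxArity s ≤ maxArity t := by
  induction q generalizing t with
  | nil => simp [subtreeAt] at h; subst h; exact le_refl _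
  | cons i q ih =>
    rw [subtreeAt] at h
    cases hc : (childrenOf t)[i]? with
    | none => rw [hc] at h; simp at h
    | some c =>
      rw [hc] at h
      have hmem : c ∈ childrenOf t := by
        obtain ⟨hlt, rfl⟩ := List.getElem?_eq_some_iff.1 hc
        exact List.getElem_mem _
      cases t with
      | node cs => exact le_trans (ih h) (maxArity_child_le hmem)

private lemma subtreeAt_append_singleton (q : List ℕ) (t : PlaneTree) (j : ℕ) :
    t.subtreeAt (q ++ [j]) = (t.subtreeAt q).bind (fun s => (childrenOf s)[j]?) := by
  induction q generalizing t with
  | nil =>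
    cases h : (childrenOf t)[j]? with
    | none => simp [subtreeAt, h]
    | some c => simp [subtreeAt, h]
  | cons i q ih =>
    simp only [List.cons_append, subtreeAt]
    cases h : (childrenOf t)[i]? with
    | none => simp
    | some c => simp [ih]

/-- If `v'` is the parent (at depth `ℓ`) of a non-root node `u`, then
`1 < x_u - x_{v'} < 1 + (m+2)^{-ℓ+1}`, where `m` is the maximal arity. -/
theorem xVal_sub_parent_bounds (t : PlaneTree) (p : List ℕ)
    (hp : IsNode t p) (hp0 : p ≠ []) :
    1 < xVal t p - xVal t p.dropLast ∧
      xVal t p - xVal t p.dropLast <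
        1 + ((maxArity t : ℝ) + 2) ^ (-(p.dropLast.length : ℤ) + 1) := by
  obtain ⟨q, j, rfl⟩ : ∃ q j, p = q ++ [j] :=
    ⟨p.dropLast, p.getLast hp0, (List.dropLast_append_getLast hp0).symm⟩
  rw [List.dropLast_concat]
  -- extract subtree data
  rw [IsNode, subtreeAt_append_singleton] at hp
  obtain ⟨s, hs⟩ : ∃ s, t.subtreeAt q = some s := by
    cases h : t.subtreeAt q with
    | none => rw [h] at hp; simp at hp
    | some s => exact ⟨s, rfl⟩
  rw [hs] at hp
  simp only [Option.bind_some] at hp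
  have hj : j < s.childrenOf.length := by
    by_contra h
    rw [List.getElem?_eq_none (by omega)] at hp
    simp at hp
  have harity : arityAt t q = s.childrenOf.length := by simp [arityAt, hs]
  have hma : s.childrenOf.length ≤ maxArity t :=
    le_trans (childrenOf_length_le s) (maxArity_subtreeAt hs)
  set c : ℕ := s.childrenOf.length - j with hc
  have hc1 : 1 ≤ c := by omega
  have hc2 : c ≤ maxArity t := by omega
  set M : ℝ := (maxArity t : ℝ) + 2 with hMdef
  have hM : (2 : ℝ) ≤ M := by
    rw [hMdef]; have : (0:ℝ) ≤ (maxArity t : ℝ) := Nat.cast_nonneg _; linarith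
  have hM0 : (0 : ℝ) < M := by linarith
  have hsum : xVal t (q ++ [j]) - xVal t q
      = 1 + (c : ℝ) * M ^ (-((q.length : ℤ) + 1)) := by
    unfold xVal
    rw [List.length_append, List.length_singleton, Finset.sum_range_succ]
    have hcongr : ∀ i ∈ Finset.range q.length,
        (cAt t (q ++ [j]) i : ℝ) * M ^ (-((i : ℤ) + 1))
          = (cAt t q i : ℝ) * M ^ (-((i : ℤ) + 1)) := by
      intro i hi
      rw [Finset.mem_range] at hi
      congr 2
      rw [cAt, cAt, List.take_append_of_le_length (by omega),
        List.getD_eq_getElem?_getD, List.getD_eq_getElem?_getD, List.getElem?_append_left hi]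
    rw [Finset.sum_congr rfl hcongr]
    have hlast : cAt t (q ++ [j]) q.length = c := by
      rw [cAt, List.take_left, List.getD_eq_getElem?_getD, List.getElem?_concat_length, harity]
      rfl
    rw [hlast]
    push_cast
    ring
  have hpow : (0 : ℝ) < M ^ (-((q.length : ℤ) + 1)) := zpow_pos hM0 _
  constructor
  · rw [hsum]
    have : (1 : ℝ) ≤ (c : ℝ) := by exact_mod_cast hc1
    nlinarith
  · rw [hsum]
    have h2 : M ^ (-(q.length : ℤ) + 1) = M ^ (2 : ℤ) * M ^ (-((q.length : ℤ) + 1)) := by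
      rw [← zpow_add₀ (ne_of_gt hM0)]
      congr 1
      ring
    rw [h2]
    have hcM : (c : ℝ) < M ^ (2 : ℤ) := by
      have : (c : ℝ) ≤ (maxArity t : ℝ) := by exact_mod_cast hc2
      rw [hMdef, zpow_two]
      nlinarith [Nat.cast_nonneg (α := ℝ) (maxArity t)]
    nlinarith [mul_lt_mul_of_pos_right hcM hpow]
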